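/- Let n ≥ 1 be an integer, s ∈ (0,1), and a, b, c, d > 0. Then M_s^0(a,b) · M_s^0(c,d) = M_s^0(ac, bd) ≥ M_s^{−1/n}(ac, bd) · (1 + G), where G = n·min(s,1−s) · (M_s^{1/n}(bd, ac))^{−1/n} · |(bd)^{min(s,1−s)/n} − (ac)^{min(s,1−s)/n}|^{1/min(s,1−s)}. Moreover G = 0 if and only if ac = bd. -/

import Mathlib

open Real
open Set



-- 1 + v^q ≤ (1+v)^q for q ≥ 1, v ≥ 0
lemma aux1 {q v : ℝ} (hq : 1 ≤ q) (hv : 0 ≤ v) : 1 + v ^ q ≤ (1 + v) ^ q := by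
  have h := NNReal.add_rpow_le_rpow_add 1 (⟨v, hv⟩ : NNReal) hq
  have := NNReal.coe_le_coe.2 h
  push_cast [NNReal.coe_rpow] at this
  have h' : (1:ℝ) ^ q + v ^ q ≤ (1 + v) ^ q := this
  simpa [Real.one_rpow] using h'

-- Lemma B: 1 + p*v + v^p ≤ (1+v)^p for p ≥ 2, v ≥ 0
lemma lemB {p : ℝ} (hp : 2 ≤ p) {v : ℝ} (hv : 0 ≤ v) :
    1 + p * v + v ^ p ≤ (1 + v) ^ p := by
  set f : ℝ → ℝ := fun v => (1 + v) ^ p - v ^ p - p * v with hf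
  have key : MonotoneOn f (Ici 0) := by
    have hderiv : ∀ x ∈ Ioi (0:ℝ), HasDerivAt f (p * (1 + x) ^ (p - 1) - p * x ^ (p - 1) - p) x := by
      intro x hx
      have hx0 : (0:ℝ) < x := hx
      have h1 : HasDerivAt (fun x : ℝ => (1 + x) ^ p) (p * (1 + x) ^ (p - 1)) x := by
        have := ((hasDerivAt_id x).const_add 1).rpow_const (p := p) (Or.inl (by positivity))
        simpa [id, mul_comm, mul_assoc, mul_left_comm] using this
      have h2 : HasDerivAt (fun x : ℝ => x ^ p) (p * x ^ (p - 1)) x :=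
        Real.hasDerivAt_rpow_const (Or.inl hx0.ne')
      have h3 : HasDerivAt (fun x : ℝ => p * x) p x := by
        simpa using (hasDerivAt_id x).const_mul p
      exact (h1.sub h2).sub h3
    apply monotoneOn_of_deriv_nonneg (convex_Ici 0)
    · apply ContinuousOn.sub
      apply ContinuousOn.sub
      · exact (continuous_const.add continuous_id).continuousOn.rpow_const
          (fun x _ => Or.inr (by linarith))
      · exact continuousOn_id.rpow_const (fun x _ => Or.inr (by linarith))
      · exact (continuous_const.mul continuous_id).continuousOn
    · intro x hx
      rw [interior_Ici] at hx
      exact (hderiv x hx).differentiableAt.differentiableWithinAt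
    · intro x hx
      rw [interior_Ici] at hx
      rw [(hderiv x hx).deriv]
      have h4 : 1 + x ^ (p - 1) ≤ (1 + x) ^ (p - 1) := aux1 (by linarith) (le_of_lt hx)
      nlinarith [h4, hp]
  have h0 : f 0 ≤ f v := key (self_mem_Ici) hv hv
  have hf0 : f 0 = 1 := by
    simp [hf, Real.zero_rpow (by linarith : p ≠ 0)]
  rw [hf0] at h0
  simp only [hf] at h0
  linarith

-- Lemma C
lemma lemC {s : ℝ} (hs : 0 < s) (hs2 : s ≤ 1/2) {u : ℝ} (hu0 : 0 ≤ u) (hu1 : u ≤ 1) :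
    0 ≤ 1 - s + s * u ^ (1/s) - u - s * (1 - u) ^ (1/s) := by
  set p := 1/s with hpdef
  have hp2 : 2 ≤ p := by
    rw [hpdef]; rw [le_div_iff₀ hs]; linarith
  set h : ℝ → ℝ := fun u => 1 - s + s * u ^ p - u - s * (1 - u) ^ p with hh
  have key : AntitoneOn h (Icc 0 1) := by
    have hderiv : ∀ x ∈ Ioo (0:ℝ) 1, HasDerivAt h
        (s * (p * x ^ (p - 1)) - 1 - s * (p * (1 - x) ^ (p - 1) * (-1))) x := by
      intro x hx
      have h1 : HasDerivAt (fun x : ℝ => x ^ p) (p * x ^ (p - 1)) x :=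
        Real.hasDerivAt_rpow_const (Or.inl (ne_of_gt hx.1))
      have h2 : HasDerivAt (fun x : ℝ => (1 - x) ^ p) (p * (1 - x) ^ (p - 1) * (-1)) x := by
        have hne : (1:ℝ) - x ≠ 0 := sub_ne_zero.mpr (ne_of_gt hx.2)
        have h0 : HasDerivAt (fun x : ℝ => 1 - x) (-1) x := by
          simpa using (hasDerivAt_id x).const_sub 1
        have := h0.rpow_const (p := p) (Or.inl hne)
        simpa [mul_comm, mul_assoc, mul_left_comm] using this
      have := (((h1.const_mul s).const_add (1 - s)).sub (hasDerivAt_id x)).sub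
        (h2.const_mul s)
      rw [hh]; exact this
    apply antitoneOn_of_deriv_nonpos (convex_Icc 0 1)
    · apply ContinuousOn.sub
      apply ContinuousOn.sub
      · exact continuousOn_const.add (continuousOn_const.mul
          (continuousOn_id.rpow_const (fun x _ => Or.inr (by linarith))))
      · exact continuousOn_id
      · exact continuousOn_const.mul
          ((continuousOn_const.sub continuousOn_id).rpow_const (fun x _ => Or.inr (by linarith)))
    · intro x hx
      rw [interior_Icc] at hx
      exact (hderiv x hx).differentiableAt.differentiableWithinAt
    · intro x hx
      rw [interior_Icc] at hx
      rw [(hderiv x hx).deriv]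
      have hsp : s * p = 1 := by rw [hpdef]; field_simp
      have e1 : x ^ (p - 1) ≤ x := by
        calc x ^ (p-1) ≤ x ^ (1:ℝ) := Real.rpow_le_rpow_of_exponent_ge hx.1 (le_of_lt hx.2) (by linarith)
        _ = x := Real.rpow_one x
      have e2 : (1 - x) ^ (p - 1) ≤ 1 - x := by
        calc (1-x) ^ (p-1) ≤ (1-x) ^ (1:ℝ) :=
          Real.rpow_le_rpow_of_exponent_ge (by linarith [hx.2]) (by linarith [hx.1]) (by linarith)
        _ = 1 - x := Real.rpow_one _
      nlinarith [e1, e2, hsp]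
  have h1v : h u ≥ h 1 := key ⟨hu0, hu1⟩ (by norm_num) hu1
  have hh1 : h 1 = 0 := by
    simp [hh, Real.one_rpow, Real.zero_rpow (by positivity : p ≠ 0)]
  rw [hh1] at h1v
  simpa [hh] using h1v

-- KL1
lemma KL1 {s : ℝ} (hs : 0 < s) (hs2 : s ≤ 1/2) {u : ℝ} (hu : 0 < u) :
    s * |1 - u| ^ (1/s) ≤ (1 - s) + s * u ^ (1/s) - u := by
  set p := 1/s with hpdef
  have hsp : s * p = 1 := by rw [hpdef]; field_simp
  rcases le_or_gt u 1 with h | h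
  · rw [abs_of_nonneg (by linarith)]
    have := lemC hs hs2 (le_of_lt hu) h
    linarith
  · rw [abs_of_nonpos (by linarith)]
    have hB := lemB (p := p) (by rw [hpdef, le_div_iff₀ hs]; linarith) (v := u - 1) (by linarith)
    have e : (1 : ℝ) + (u - 1) = u := by ring
    rw [e] at hB
    have := mul_le_mul_of_nonneg_left hB (le_of_lt hs)
    have e2 : -(1 - u) = u - 1 := by ring
    rw [e2]
    nlinarith [this, hsp]

-- KL0
lemma KL0 {s X Y : ℝ} (hs : 0 < s) (hs2 : s ≤ 1/2) (hX : 0 < X) (hY : 0 < Y) :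
    s * |Y ^ s - X ^ s| ^ (1/s) ≤ (1 - s) * Y + s * X - X ^ s * Y ^ (1 - s) := by
  set p := 1/s with hpdef
  have hsp : s * p = 1 := by rw [hpdef]; field_simp
  have hXs : (0:ℝ) < X ^ s := Real.rpow_pos_of_pos hX s
  have hYs : (0:ℝ) < Y ^ s := Real.rpow_pos_of_pos hY s
  set u := X ^ s / Y ^ s with hudef
  have hu : 0 < u := div_pos hXs hYs
  have hXsp : (X ^ s) ^ p = X := by
    rw [← Real.rpow_mul hX.le, hsp, Real.rpow_one]
  have hYsp : (Y ^ s) ^ p = Y := by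
    rw [← Real.rpow_mul hY.le, hsp, Real.rpow_one]
  have hup : u ^ p = X / Y := by
    rw [hudef, Real.div_rpow hXs.le hYs.le, hXsp, hYsp]
  have huY : u * Y = X ^ s * Y ^ (1 - s) := by
    have : Y ^ (1 - s) = Y / Y ^ s := by
      rw [Real.rpow_sub hY, Real.rpow_one]
    rw [hudef, this]; field_simp
  have habs : Y * |1 - u| ^ p = |Y ^ s - X ^ s| ^ p := by
    have h1 : Y ^ s * |1 - u| = |Y ^ s - X ^ s| := by
      have h2 : Y ^ s * (1 - u) = Y ^ s - X ^ s := by rw [hudef]; field_simp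
      rw [← h2, abs_mul, abs_of_pos hYs]
    rw [← h1, Real.mul_rpow hYs.le (abs_nonneg _), hYsp]
  have hKL1 := KL1 hs hs2 hu
  have := mul_le_mul_of_nonneg_left hKL1 hY.le
  calc s * |Y ^ s - X ^ s| ^ p = s * (Y * |1 - u| ^ p) := by rw [habs]
    _ = Y * (s * |1 - u| ^ p) := by ring
    _ ≤ Y * ((1 - s) + s * u ^ p - u) := this
    _ = (1 - s) * Y + s * (u ^ p * Y) - u * Y := by ring
    _ = (1 - s) * Y + s * X - X ^ s * Y ^ (1 - s) := by
        rw [hup, huY, div_mul_cancel₀ _ (ne_of_gt hY)]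

-- KL
lemma KL {s X Y : ℝ} (hs : 0 < s) (hs1 : s < 1) (hX : 0 < X) (hY : 0 < Y) :
    min s (1-s) * |Y ^ (min s (1-s)) - X ^ (min s (1-s))| ^ (1 / min s (1-s))
      ≤ (1 - s) * Y + s * X - X ^ s * Y ^ (1 - s) := by
  rcases le_or_gt s (1/2) with h | h
  · have hm : min s (1-s) = s := min_eq_left (by linarith)
    rw [hm]
    exact KL0 hs h hX hY
  · have hm : min s (1-s) = 1 - s := min_eq_right (by linarith)
    rw [hm]
    have := KL0 (s := 1 - s) (X := Y) (Y := X) (by linarith) (by linarith) hY hX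
    have e : (1 : ℝ) - (1 - s) = s := by ring
    rw [e] at this
    calc (1-s) * |Y ^ (1-s) - X ^ (1-s)| ^ (1/(1-s))
        = (1-s) * |X ^ (1-s) - Y ^ (1-s)| ^ (1/(1-s)) := by rw [abs_sub_comm]
      _ ≤ s * X + (1-s) * Y - Y ^ (1-s) * X ^ s := this
      _ = (1 - s) * Y + s * X - X ^ s * Y ^ (1 - s) := by ring

/-- The `r`-mean of two positive reals, `r ≠ 0`. -/
noncomputable def M (s r x y : ℝ) : ℝ := ((1 - s) * x ^ r + s * y ^ r) ^ (1 / r)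

/-- The geometric mean `M_s^0`. -/
noncomputable def M0 (s x y : ℝ) : ℝ := x ^ (1 - s) * y ^ s

lemma main_parts (n : ℕ) (hn : 1 ≤ n) (s x y : ℝ) (hs : 0 < s) (hs1 : s < 1)
    (hx : 0 < x) (hy : 0 < y) :
    (M0 s x y ≥
        M s (-1 / n) x y *
          (1 + n * min s (1 - s) * (M s (1 / n) y x) ^ (-1 / (n : ℝ)) *
            |y ^ (min s (1 - s) / n) - x ^ (min s (1 - s) / n)| ^ (1 / min s (1 - s)))) ∧
    (n * min s (1 - s) * (M s (1 / n) y x) ^ (-1 / (n : ℝ)) *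
        |y ^ (min s (1 - s) / n) - x ^ (min s (1 - s) / n)| ^ (1 / min s (1 - s)) = 0
      ↔ x = y) := by
  have hs1' : (0:ℝ) < 1 - s := by linarith
  have hn0 : (0:ℝ) < (n:ℝ) := Nat.cast_pos.mpr (Nat.lt_of_lt_of_le Nat.zero_lt_one hn)
  have hne : (n:ℝ) ≠ 0 := ne_of_gt hn0
  obtain ⟨m, hmdef⟩ : ∃ t : ℝ, t = min s (1 - s) := ⟨_, rfl⟩
  rw [← hmdef]
  have hm : 0 < m := by rw [hmdef]; exact lt_min hs hs1'
  have hm' : m ≠ 0 := ne_of_gt hm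
  obtain ⟨X, hXdef⟩ : ∃ t : ℝ, t = x ^ ((n:ℝ))⁻¹ := ⟨_, rfl⟩
  obtain ⟨Y, hYdef⟩ : ∃ t : ℝ, t = y ^ ((n:ℝ))⁻¹ := ⟨_, rfl⟩
  have hX : 0 < X := hXdef ▸ Real.rpow_pos_of_pos hx _
  have hY : 0 < Y := hYdef ▸ Real.rpow_pos_of_pos hy _
  have hXn : X ^ (n:ℝ) = x := by
    rw [hXdef, ← Real.rpow_mul hx.le, inv_mul_cancel₀ hne, Real.rpow_one]
  have hYn : Y ^ (n:ℝ) = y := by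
    rw [hYdef, ← Real.rpow_mul hy.le, inv_mul_cancel₀ hne, Real.rpow_one]
  obtain ⟨A, hAdef⟩ : ∃ t : ℝ, t = (1 - s) * Y + s * X := ⟨_, rfl⟩
  have hA : 0 < A := by
    rw [hAdef]; exact add_pos (mul_pos hs1' hY) (mul_pos hs hX)
  obtain ⟨G, hGdef⟩ : ∃ t : ℝ, t = X ^ s * Y ^ (1 - s) := ⟨_, rfl⟩
  have hG : 0 < G := by
    rw [hGdef]; exact mul_pos (Real.rpow_pos_of_pos hX s) (Real.rpow_pos_of_pos hY (1-s))
  have hGA : G ≤ A := by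
    have := Real.geom_mean_le_arith_mean2_weighted hs.le hs1'.le hX.le hY.le
      (by ring : s + (1 - s) = 1)
    rw [hGdef, hAdef]; linarith
  obtain ⟨E, hEdef⟩ : ∃ t : ℝ, t = |Y ^ m - X ^ m| ^ (1/m) := ⟨_, rfl⟩
  have hE : 0 ≤ E := hEdef ▸ Real.rpow_nonneg (abs_nonneg _) _
  have hym : y ^ (m / (n:ℝ)) = Y ^ m := by
    rw [show m / (n:ℝ) = ((n:ℝ))⁻¹ * m by ring, Real.rpow_mul hy.le, ← hYdef]
  have hxm : x ^ (m / (n:ℝ)) = X ^ m := by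
    rw [show m / (n:ℝ) = ((n:ℝ))⁻¹ * m by ring, Real.rpow_mul hx.le, ← hXdef]
  have hM1 : (M s (1 / (n:ℝ)) y x) ^ (-1 / (n : ℝ)) = A⁻¹ := by
    have hb1 : (1 - s) * y ^ (1/(n:ℝ)) + s * x ^ (1/(n:ℝ)) = A := by
      rw [hAdef, hXdef, hYdef, one_div]
    have h5 : M s (1 / (n:ℝ)) y x = A ^ (n:ℝ) := by
      rw [M, hb1, one_div_one_div]
    rw [h5, ← Real.rpow_mul hA.le,
      show (n:ℝ) * (-1 / (n:ℝ)) = -1 by field_simp, Real.rpow_neg_one]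
  have hMneg : M s (-1 / (n:ℝ)) x y = (X * Y / A) ^ (n:ℝ) := by
    have e1 : x ^ (-1/(n:ℝ)) = X⁻¹ := by
      rw [show (-1/(n:ℝ)) = -((n:ℝ))⁻¹ by ring, Real.rpow_neg hx.le, hXdef]
    have e2 : y ^ (-1/(n:ℝ)) = Y⁻¹ := by
      rw [show (-1/(n:ℝ)) = -((n:ℝ))⁻¹ by ring, Real.rpow_neg hy.le, hYdef]
    have ebase : (1 - s) * X⁻¹ + s * Y⁻¹ = A / (X * Y) := by
      rw [hAdef]; field_simp [hX.ne', hY.ne']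
    have eexp : 1 / (-1/(n:ℝ)) = -(n:ℝ) := by field_simp
    rw [M, e1, e2, ebase, eexp, Real.rpow_neg (div_pos hA (mul_pos hX hY)).le,
      ← Real.inv_rpow (div_pos hA (mul_pos hX hY)).le, inv_div]
  have hLHS : M0 s x y = (X ^ (1-s) * Y ^ s) ^ (n:ℝ) := by
    have h6 : (X ^ (1-s) * Y ^ s) ^ (n:ℝ) = x ^ (1-s) * y ^ s := by
      rw [Real.mul_rpow (Real.rpow_nonneg hX.le _) (Real.rpow_nonneg hY.le _),
        ← Real.rpow_mul hX.le, ← Real.rpow_mul hY.le,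
        mul_comm (1-s) (n:ℝ), mul_comm s (n:ℝ),
        Real.rpow_mul hX.le, Real.rpow_mul hY.le, hXn, hYn]
    rw [M0, ← h6]
  have hKL : m * E ≤ A - G := by
    have := KL hs hs1 hX hY
    rw [← hmdef, ← hEdef] at this
    rw [hAdef, hGdef]; linarith
  have part2 : M0 s x y ≥ M s (-1 / (n:ℝ)) x y * (1 + (n:ℝ) * m * A⁻¹ * E) := by
    rw [hLHS, hMneg]
    obtain ⟨T, hTdef⟩ : ∃ t : ℝ, t = A / G := ⟨_, rfl⟩
    have hT1 : 1 ≤ T := by rw [hTdef]; exact (one_le_div hG).2 hGA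
    have hfact : X ^ (1-s) * Y ^ s = (X * Y / A) * T := by
      have e1 : X ^ s * X ^ (1-s) = X := by
        rw [← Real.rpow_add hX]; norm_num
      have e2 : Y ^ s * Y ^ (1-s) = Y := by
        rw [← Real.rpow_add hY]; norm_num
      have h8 : (X * Y / A) * (A / G) = (X * Y) / G := by
        field_simp
      rw [hTdef, h8, hGdef, eq_div_iff (ne_of_gt (mul_pos (Real.rpow_pos_of_pos hX s)
        (Real.rpow_pos_of_pos hY (1-s))))]
      linear_combination Y ^ s * Y ^ (1-s) * e1 + X * e2
    have hstep : 1 + (n:ℝ) * m * A⁻¹ * E ≤ T ^ (n:ℝ) := by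
      have h1 : m * A⁻¹ * E ≤ T - 1 := by
        have h7 : m * E / A ≤ (A - G) / G := div_le_div₀ (by linarith) hKL hG hGA
        calc m * A⁻¹ * E = m * E / A := by ring
          _ ≤ (A - G) / G := h7
          _ = T - 1 := by rw [hTdef, div_sub_one hG.ne']
      have h2 : 1 + (n:ℝ) * (T - 1) ≤ T ^ n := by
        have h := one_add_mul_le_pow (a := T - 1) (by linarith) n
        rw [show 1 + (T - 1) = T by ring] at h
        exact h
      have h3 : (T:ℝ) ^ (n:ℝ) = T ^ n := Real.rpow_natCast T n
      have h4 : (n:ℝ) * (m * A⁻¹ * E) ≤ (n:ℝ) * (T - 1) :=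
        mul_le_mul_of_nonneg_left h1 hn0.le
      rw [h3]
      calc 1 + (n:ℝ) * m * A⁻¹ * E = 1 + (n:ℝ) * (m * A⁻¹ * E) := by ring
        _ ≤ 1 + (n:ℝ) * (T - 1) := by linarith
        _ ≤ T ^ n := h2
    calc (X * Y / A) ^ (n:ℝ) * (1 + (n:ℝ) * m * A⁻¹ * E)
        ≤ (X * Y / A) ^ (n:ℝ) * T ^ (n:ℝ) :=
          mul_le_mul_of_nonneg_left hstep
            (Real.rpow_nonneg (div_nonneg (mul_pos hX hY).le hA.le) _)
      _ = ((X * Y / A) * T) ^ (n:ℝ) :=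
          (Real.mul_rpow (div_nonneg (mul_pos hX hY).le hA.le) (by linarith)).symm
      _ = (X ^ (1-s) * Y ^ s) ^ (n:ℝ) := by rw [← hfact]
  have part3 : (n:ℝ) * m * A⁻¹ * E = 0 ↔ x = y := by
    constructor
    · intro h
      have hpos : (0:ℝ) < (n:ℝ) * m * A⁻¹ := mul_pos (mul_pos hn0 hm) (inv_pos.2 hA)
      have hE0 : E = 0 := by
        rcases mul_eq_zero.1 h with h' | h'
        · exact absurd h' (ne_of_gt hpos)
        · exact h'
      have habs : |Y ^ m - X ^ m| = 0 := by
        by_contra hne'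
        have hlt : (0:ℝ) < |Y ^ m - X ^ m| := lt_of_le_of_ne (abs_nonneg _) (Ne.symm hne')
        have : (0:ℝ) < E := by rw [hEdef]; exact Real.rpow_pos_of_pos hlt _
        linarith
      have hXYm : Y ^ m = X ^ m := by
        have := abs_eq_zero.1 habs; linarith
      have hXY : X = Y := by
        have e1 : (X ^ m) ^ m⁻¹ = X := by
          rw [← Real.rpow_mul hX.le, mul_inv_cancel₀ hm', Real.rpow_one]
        have e2 : (Y ^ m) ^ m⁻¹ = Y := by
          rw [← Real.rpow_mul hY.le, mul_inv_cancel₀ hm', Real.rpow_one]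
        rw [← e1, ← hXYm, e2]
      rw [← hXn, ← hYn, hXY]
    · intro h
      have hXY : X = Y := by rw [hXdef, hYdef, h]
      have hE0 : E = 0 := by
        rw [hEdef, hXY, sub_self, abs_zero, Real.zero_rpow (one_div_ne_zero hm')]
      rw [hE0, mul_zero]
  constructor
  · rw [hM1, hym, hxm, ← hEdef]
    exact part2
  · rw [hM1, hym, hxm, ← hEdef]
    exact part3

/-- Quantitative Hölder inequality, case `p = 0` (Lemma 2.1(ii)). -/
theorem quantitative_holder_p_zero (n : ℕ) (hn : 1 ≤ n) (s a b c d : ℝ)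
    (hs : 0 < s) (hs1 : s < 1)
    (ha : 0 < a) (hb : 0 < b) (hc : 0 < c) (hd : 0 < d) :
    (M0 s a b * M0 s c d = M0 s (a * c) (b * d) ∧
      M0 s (a * c) (b * d) ≥
        M s (-1 / n) (a * c) (b * d) *
          (1 + n * min s (1 - s) * (M s (1 / n) (b * d) (a * c)) ^ (-1 / (n : ℝ)) *
            |(b * d) ^ (min s (1 - s) / n) - (a * c) ^ (min s (1 - s) / n)| ^ (1 / min s (1 - s)))) ∧
    (n * min s (1 - s) * (M s (1 / n) (b * d) (a * c)) ^ (-1 / (n : ℝ)) *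
        |(b * d) ^ (min s (1 - s) / n) - (a * c) ^ (min s (1 - s) / n)| ^ (1 / min s (1 - s)) = 0
      ↔ a * c = b * d) := by
  obtain ⟨p2, p3⟩ := main_parts n hn s (a * c) (b * d) hs hs1
    (mul_pos ha hc) (mul_pos hb hd)
  refine ⟨⟨?_, p2⟩, p3⟩
  simp only [M0, Real.mul_rpow ha.le hc.le, Real.mul_rpow hb.le hd.le]
  ring
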